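/- Under the FedOMD setting, the dynamic regret over T rounds satisfies Σ_{t=1}^T F^{(t)}(x^{(t)}) − Σ_{t=1}^T F^{(t)}(x^{(t),*}) ≤ √T·B_φ(x^*; x^{(1)}) + (μ²/2)·√T + 2·T·Δ_{[1,T]}. -/

import Mathlib

open Finset RealInnerProductSpace

lemma convex_grad_ineq {E : Type*} [NormedAddCommGroup E] [InnerProductSpace ℝ E] [CompleteSpace E]
    {f : E → ℝ} {g x : E} (hf : ConvexOn ℝ Set.univ f) (hg : HasGradientAt f g x) (y : E) :
    f x + ⟪g, y - x⟫ ≤ f y := by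
  set ψ : ℝ → ℝ := f ∘ (AffineMap.lineMap x y) with hψdef
  have hψ : ConvexOn ℝ Set.univ ψ := by
    have := hf.comp_affineMap (AffineMap.lineMap x y (k := ℝ))
    simpa using this
  have hline : HasDerivAt (fun s : ℝ => AffineMap.lineMap x y s) (y - x) 0 := by
    have heq : (fun s : ℝ => AffineMap.lineMap x y s) = fun s : ℝ => s • (y - x) + x := by
      funext s; simp [AffineMap.lineMap_apply_module]; module
    rw [heq]
    simpa using ((hasDerivAt_id (0:ℝ)).smul_const (y - x)).add_const x
  have hd : HasDerivAt ψ ⟪g, y - x⟫ 0 := by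
    have hF := (hasGradientAt_iff_hasFDerivAt.mp hg)
    have : HasDerivAt ψ ((InnerProductSpace.toDual ℝ E g) (y - x)) 0 := by
      have h0 : AffineMap.lineMap x y (0:ℝ) = x := by simp
      exact (h0 ▸ hF).comp_hasDerivAt 0 hline
    simpa [InnerProductSpace.toDual_apply_apply] using this
  have hs := hψ.le_slope_of_hasDerivAt (Set.mem_univ (0:ℝ)) (Set.mem_univ (1:ℝ)) one_pos hd
  have h1 : ψ 1 = f y := by simp [hψdef]
  have h0 : ψ 0 = f x := by simp [hψdef]
  rw [slope_def_field] at hs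
  simp [h1, h0] at hs
  linarith

lemma min_grad_eq {E : Type*} [NormedAddCommGroup E] [InnerProductSpace ℝ E] [CompleteSpace E]
    {φ : E → ℝ} {Gφ : E → E} (hφgrad : ∀ y, HasGradientAt φ (Gφ y) y)
    {g xt xp : E} {c : ℝ}
    (hmin : ∀ y, ⟪g, xp⟫ + c * (φ xp - φ xt - ⟪Gφ xt, xp - xt⟫) ≤
      ⟪g, y⟫ + c * (φ y - φ xt - ⟪Gφ xt, y - xt⟫)) :
    ∀ u : E, ⟪g, u⟫ + c * ⟪Gφ xp - Gφ xt, u⟫ = 0 := by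
  set h : E → ℝ := fun y => ⟪g, y⟫ + c * (φ y - φ xt - ⟪Gφ xt, y - xt⟫) with hhdef
  set L : E →L[ℝ] ℝ :=
    innerSL ℝ g + c • ((InnerProductSpace.toDual ℝ E (Gφ xp) : E →L[ℝ] ℝ) - innerSL ℝ (Gφ xt))
    with hLdef
  have h1 : HasFDerivAt (fun y : E => ⟪g, y⟫) (innerSL ℝ g) xp := (innerSL ℝ g).hasFDerivAt
  have h2 : HasFDerivAt φ (InnerProductSpace.toDual ℝ E (Gφ xp) : E →L[ℝ] ℝ) xp :=
    hasGradientAt_iff_hasFDerivAt.mp (hφgrad xp)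
  have h3 : HasFDerivAt (fun y : E => ⟪Gφ xt, y - xt⟫) (innerSL ℝ (Gφ xt)) xp := by
    have heq : (fun y : E => ⟪Gφ xt, y - xt⟫) = fun y : E => ⟪Gφ xt, y⟫ - ⟪Gφ xt, xt⟫ :=
      funext fun y => by rw [inner_sub_right]
    rw [heq]
    exact (innerSL ℝ (Gφ xt)).hasFDerivAt.sub_const _
  have hF : HasFDerivAt h L xp := by
    have := h1.add ((((h2.sub_const (φ xt)).sub h3)).const_smul c)
    convert this using 1
    all_goals rfl
  have hlocal : IsLocalMin h xp := Filter.Eventually.of_forall hmin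
  have hL0 : L = 0 := hlocal.hasFDerivAt_eq_zero hF
  intro u
  have : L u = 0 := by rw [hL0]; simp
  simpa [hLdef, inner_sub_left, smul_eq_mul, mul_sub] using this

lemma finset_jensen {ι E : Type*} [AddCommGroup E] [Module ℝ E]
    (f : E → ℝ) (N : Finset ι) (w : ι → ℝ) (z : ι → E)
    (hJ : ∀ (j : ℕ) (zz : Fin j → E) (ww : Fin j → ℝ),
      (∀ i, 0 ≤ ww i) → (∀ i, ww i ≤ 1) → ∑ i, ww i = 1 →
      f (∑ i, ww i • zz i) ≤ ∑ i, ww i * f (zz i))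
    (h0 : ∀ n ∈ N, 0 ≤ w n) (h1 : ∀ n ∈ N, w n ≤ 1) (hsum : ∑ n ∈ N, w n = 1) :
    f (∑ n ∈ N, w n • z n) ≤ ∑ n ∈ N, w n * f (z n) := by
  classical
  let e := N.equivFin
  have key := hJ N.card (fun i => z (e.symm i)) (fun i => w (e.symm i))
    (fun i => h0 _ (e.symm i).2) (fun i => h1 _ (e.symm i).2)
    (by rw [Equiv.sum_comp e.symm (fun a : N => w a),
            Finset.sum_coe_sort N (fun a => w a)]; exact hsum)
  rw [Equiv.sum_comp e.symm (fun a : N => w (a:ι) • z (a:ι)),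
      Finset.sum_coe_sort N (fun a => w a • z a),
      Equiv.sum_comp e.symm (fun a : N => w (a:ι) * f (z (a:ι))),
      Finset.sum_coe_sort N (fun a => w a * f (z a))] at key
  exact key

/-- **FedOMD dynamic regret bound.**
Under the FedOMD setting (convex, differentiable local losses with `μ`-bounded gradients,
convex-combination weights summing to one, a differentiable `1`-strongly convex mirror map `φ`
whose Bregman divergence is jointly convex in its second argument in the stated averaged sense,
local mirror-descent updates with learning rate `1/√T` followed by weighted aggregation,
and concept drift `Δ_t` bounding the pointwise change of the global loss between consecutive
rounds), the dynamic regret over `T` rounds satisfies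
`Σ_{t=1}^T F^{(t)}(x^{(t)}) − Σ_{t=1}^T F^{(t)}(x^{(t),*})
  ≤ √T·B_φ(x^*; x^{(1)}) + (μ²/2)·√T + 2·T·Δ_{[1,T]}`. -/
theorem fedomd_dynamic_regret
    {d : ℕ} {ι : Type*} (N : Finset ι) (T : ℕ) (hT : 1 ≤ T) (μ : ℝ) (hμ : 0 ≤ μ)
    (F : ℕ → ι → EuclideanSpace ℝ (Fin d) → ℝ)
    (G : ℕ → ι → EuclideanSpace ℝ (Fin d) → EuclideanSpace ℝ (Fin d))
    (p : ℕ → ι → ℝ)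
    (Fg : ℕ → EuclideanSpace ℝ (Fin d) → ℝ)
    (Δ : ℕ → ℝ)
    (φ : EuclideanSpace ℝ (Fin d) → ℝ)
    (Gφ : EuclideanSpace ℝ (Fin d) → EuclideanSpace ℝ (Fin d))
    (B : EuclideanSpace ℝ (Fin d) → EuclideanSpace ℝ (Fin d) → ℝ)
    (x xstar : ℕ → EuclideanSpace ℝ (Fin d))
    (xloc : ℕ → ι → EuclideanSpace ℝ (Fin d))
    (xs : EuclideanSpace ℝ (Fin d))
    (hconv : ∀ t ∈ Icc 1 T, ∀ n ∈ N, ConvexOn ℝ Set.univ (F t n))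
    (hgrad : ∀ t ∈ Icc 1 T, ∀ n ∈ N, ∀ y, HasGradientAt (F t n) (G t n y) y)
    (hgradbd : ∀ t ∈ Icc 1 T, ∀ n ∈ N, ∀ y, ‖G t n y‖ ≤ μ)
    (hp0 : ∀ t ∈ Icc 1 T, ∀ n ∈ N, 0 ≤ p t n)
    (hp1 : ∀ t ∈ Icc 1 T, ∀ n ∈ N, p t n ≤ 1)
    (hpsum : ∀ t ∈ Icc 1 T, ∑ n ∈ N, p t n = 1)
    (hFg : ∀ t ∈ Icc 1 T, ∀ y, Fg t y = ∑ n ∈ N, p t n * F t n y)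
    (hΔ0 : ∀ t ∈ Icc 2 T, 0 ≤ Δ t)
    (hΔ : ∀ t ∈ Icc 2 T, ∀ y, |Fg t y - Fg (t - 1) y| ≤ Δ t)
    (hφgrad : ∀ y, HasGradientAt φ (Gφ y) y)
    (hφsc : ∀ y z : EuclideanSpace ℝ (Fin d),
      φ z + ⟪Gφ z, y - z⟫ + (1 / 2) * ‖y - z‖ ^ 2 ≤ φ y)
    (hB : ∀ y z : EuclideanSpace ℝ (Fin d), B y z = φ y - φ z - ⟪Gφ z, y - z⟫)
    (hBjensen : ∀ (j : ℕ) (z : Fin j → EuclideanSpace ℝ (Fin d)) (w : Fin j → ℝ),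
      (∀ i, 0 ≤ w i) → (∀ i, w i ≤ 1) → ∑ i, w i = 1 →
      ∀ u, B u (∑ i, w i • z i) ≤ ∑ i, w i * B u (z i))
    (hlocmin : ∀ t ∈ Icc 1 T, ∀ n ∈ N, ∀ y,
      ⟪G t n (x t), xloc (t + 1) n⟫ + Real.sqrt T * B (xloc (t + 1) n) (x t) ≤
        ⟪G t n (x t), y⟫ + Real.sqrt T * B y (x t))
    (hagg : ∀ t ∈ Icc 1 T, x (t + 1) = ∑ n ∈ N, p t n • xloc (t + 1) n)
    (hxstar : ∀ t ∈ Icc 1 T, ∀ y, Fg t (xstar t) ≤ Fg t y)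
    (hxs : ∀ y, ∑ t ∈ Icc 1 T, Fg t xs ≤ ∑ t ∈ Icc 1 T, Fg t y) :
    ∑ t ∈ Icc 1 T, Fg t (x t) - ∑ t ∈ Icc 1 T, Fg t (xstar t) ≤
      Real.sqrt T * B xs (x 1) + μ ^ 2 / 2 * Real.sqrt T
        + 2 * T * ∑ t ∈ Icc 2 T, Δ t := by
  classical
  set s : ℝ := Real.sqrt T with hsdef
  have hT1 : (1:ℝ) ≤ (T:ℝ) := by exact_mod_cast hT
  have hss : s * s = (T:ℝ) := Real.mul_self_sqrt (by positivity)
  have hs1 : (1:ℝ) ≤ s := by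
    rw [hsdef]; rw [show (1:ℝ) = Real.sqrt 1 by simp]
    exact Real.sqrt_le_sqrt hT1
  have hs0 : (0:ℝ) < s := lt_of_lt_of_le one_pos hs1
  have hBnn : ∀ u z, 0 ≤ B u z := by
    intro u z
    have h := hφsc u z
    have : (0:ℝ) ≤ ‖u - z‖ ^ 2 := sq_nonneg _
    rw [hB]; linarith
  -- drift lemmas
  set D : ℝ := ∑ t ∈ Icc 2 T, Δ t with hDdef
  have hD0 : 0 ≤ D := Finset.sum_nonneg hΔ0
  have drift' : ∀ t, 1 ≤ t → t ≤ T → ∀ y, |Fg t y - Fg 1 y| ≤ ∑ r ∈ Icc 2 t, Δ r := by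
    intro t ht1
    induction t, ht1 using Nat.le_induction with
    | base => intro _ y; simp
    | succ t ht ih =>
      intro htT y
      have htT' : t ≤ T := le_trans (Nat.le_succ t) htT
      have h1 := ih htT' y
      have h2 := hΔ (t+1) (by rw [Finset.mem_Icc]; omega) y
      have ht1 : t + 1 - 1 = t := by omega
      rw [ht1] at h2
      have habs : |Fg (t+1) y - Fg 1 y| ≤ |Fg (t+1) y - Fg t y| + |Fg t y - Fg 1 y| :=
        abs_sub_le _ _ _
      rw [Finset.sum_Icc_succ_top (by omega : 2 ≤ t + 1)]
      linarith
  have drift : ∀ t, 1 ≤ t → t ≤ T → ∀ y, |Fg t y - Fg 1 y| ≤ D := by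
    intro t ht1 htT y
    refine le_trans (drift' t ht1 htT y) ?_
    exact Finset.sum_le_sum_of_subset_of_nonneg
      (Finset.Icc_subset_Icc le_rfl htT) (fun r hr _ => hΔ0 r hr)
  have h1T : (1:ℕ) ∈ Icc 1 T := by rw [Finset.mem_Icc]; omega
  have dyn : ∑ t ∈ Icc 1 T, Fg t xs - ∑ t ∈ Icc 1 T, Fg t (xstar t) ≤ 2 * T * D := by
    have hA : ∑ t ∈ Icc 1 T, Fg t xs ≤ ∑ t ∈ Icc 1 T, Fg t (xstar 1) := hxs _
    have hB2 : ∀ t ∈ Icc 1 T, Fg t (xstar 1) ≤ Fg t (xstar t) + 2 * D := by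
      intro t ht
      rw [Finset.mem_Icc] at ht
      have a1 := abs_le.mp (drift t ht.1 ht.2 (xstar 1))
      have a3 := abs_le.mp (drift t ht.1 ht.2 (xstar t))
      have a2 : Fg 1 (xstar 1) ≤ Fg 1 (xstar t) := hxstar 1 h1T _
      linarith [a1.1, a1.2, a3.1, a3.2]
    have hC : ∑ t ∈ Icc 1 T, Fg t (xstar 1) ≤
        ∑ t ∈ Icc 1 T, (Fg t (xstar t) + 2 * D) := Finset.sum_le_sum hB2
    rw [Finset.sum_add_distrib, Finset.sum_const, Nat.card_Icc] at hC
    simp only [Nat.add_sub_cancel, nsmul_eq_mul] at hC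
    linarith
  -- per-client OMD bound
  have key : ∀ t ∈ Icc 1 T, ∀ n ∈ N,
      F t n (x t) - F t n xs ≤ μ^2/(2*s) + s * (B xs (x t) - B xs (xloc (t+1) n)) := by
    intro t ht n hn
    set g := G t n (x t) with hgdef
    set xt := x t with hxtdef
    set xp := xloc (t+1) n with hxpdef
    have hgi := convex_grad_ineq (hconv t ht n hn) (hgrad t ht n hn xt) xs
    have hopt := min_grad_eq hφgrad (g := g) (xt := xt) (xp := xp) (c := s)
      (fun y => by simpa only [hB] using hlocmin t ht n hn y)
    have hgs : ⟪g, xs - xt⟫ = -⟪g, xt - xs⟫ := by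
      simp [inner_sub_right]
    have step1 : F t n xt - F t n xs ≤ ⟪g, xt - xp⟫ + s * (B xs xt - B xs xp - B xp xt) := by
      have h4 : ⟪g, xt - xs⟫ = ⟪g, xt - xp⟫ + ⟪g, xp - xs⟫ := by
        simp only [inner_sub_right]; ring
      have h5' : ⟪g, xp - xs⟫ = s * (B xs xt - B xs xp - B xp xt) := by
        have h5 := hopt (xp - xs)
        have h3pt : ⟪Gφ xp - Gφ xt, xp - xs⟫ = -(B xs xt - B xs xp - B xp xt) := by
          simp only [hB, inner_sub_left, inner_sub_right]; ring
        rw [h3pt] at h5; linarith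
      rw [hgs] at hgi
      linarith [h4, h5']
    have hcs : ⟪g, xt - xp⟫ ≤ μ * ‖xt - xp‖ :=
      le_trans (real_inner_le_norm g _)
        (mul_le_mul_of_nonneg_right (hgradbd t ht n hn xt) (norm_nonneg _))
    have hBge : (1/2) * ‖xt - xp‖^2 ≤ B xp xt := by
      have h := hφsc xp xt
      have hnorm : ‖xp - xt‖ = ‖xt - xp‖ := norm_sub_rev _ _
      rw [hB]; rw [hnorm] at h; linarith
    have step2 : ⟪g, xt - xp⟫ - s * B xp xt ≤ μ^2/(2*s) := by
      rw [le_div_iff₀ (by linarith : (0:ℝ) < 2*s)]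
      have hsB : s * ((1/2) * ‖xt - xp‖^2) ≤ s * B xp xt :=
        mul_le_mul_of_nonneg_left hBge (le_of_lt hs0)
      nlinarith [sq_nonneg (s * ‖xt - xp‖ - μ), norm_nonneg (xt - xp)]
    have hsplit : s * (B xs xt - B xs xp - B xp xt)
        = s * (B xs xt - B xs xp) - s * B xp xt := by ring
    linarith
  -- per-round bound
  have round : ∀ t ∈ Icc 1 T,
      Fg t (x t) - Fg t xs ≤ μ^2/(2*s) + s * (B xs (x t) - B xs (x (t+1))) := by
    intro t ht
    have expand : ∀ n ∈ N, p t n * (μ^2/(2*s) + s * (B xs (x t) - B xs (xloc (t+1) n)))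
        = (μ^2/(2*s) + s * B xs (x t)) * p t n - s * (p t n * B xs (xloc (t+1) n)) :=
      fun n _ => by ring
    have hsum1 := hpsum t ht
    have hle : ∑ n ∈ N, p t n * (F t n (x t) - F t n xs) ≤
        ∑ n ∈ N, p t n * (μ^2/(2*s) + s * (B xs (x t) - B xs (xloc (t+1) n))) :=
      Finset.sum_le_sum (fun n hn => mul_le_mul_of_nonneg_left (key t ht n hn) (hp0 t ht n hn))
    rw [Finset.sum_congr rfl expand, Finset.sum_sub_distrib, ← Finset.mul_sum,
        ← Finset.mul_sum, hsum1, mul_one] at hle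
    have hlhs : ∑ n ∈ N, p t n * (F t n (x t) - F t n xs)
        = Fg t (x t) - Fg t xs := by
      rw [hFg t ht (x t), hFg t ht xs, ← Finset.sum_sub_distrib]
      exact Finset.sum_congr rfl (fun n _ => by ring)
    rw [hlhs] at hle
    have hjen : B xs (x (t+1)) ≤ ∑ n ∈ N, p t n * B xs (xloc (t+1) n) := by
      rw [hagg t ht]
      exact finset_jensen (B xs) N (p t) (xloc (t+1))
        (fun j zz ww a b c => hBjensen j zz ww a b c xs)
        (hp0 t ht) (hp1 t ht) hsum1
    have := mul_le_mul_of_nonneg_left hjen (le_of_lt hs0)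
    linarith
  -- telescoping sum
  have tel : ∑ t ∈ Icc 1 T, (B xs (x t) - B xs (x (t+1))) = B xs (x 1) - B xs (x (T+1)) := by
    rw [← Finset.Ico_add_one_right_eq_Icc, Finset.sum_Ico_eq_sum_range]
    rw [Finset.sum_congr rfl (fun i _ => by rw [Nat.add_comm 1 i])]
    exact Finset.sum_range_sub' (fun i => B xs (x (i+1))) T
  have omd : ∑ t ∈ Icc 1 T, Fg t (x t) - ∑ t ∈ Icc 1 T, Fg t xs ≤
      s * B xs (x 1) + μ^2/2 * s := by
    have hsum2 := Finset.sum_le_sum round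
    rw [Finset.sum_sub_distrib] at hsum2
    rw [Finset.sum_add_distrib, ← Finset.mul_sum, tel, Finset.sum_const, Nat.card_Icc,
        nsmul_eq_mul] at hsum2
    simp only [Nat.add_sub_cancel] at hsum2
    have hTmu : (T:ℝ) * (μ^2/(2*s)) = μ^2/2 * s := by
      rw [← hss]; field_simp
    rw [hTmu] at hsum2
    have hBend : 0 ≤ B xs (x (T+1)) := hBnn _ _
    nlinarith [mul_le_mul_of_nonneg_left hBend (le_of_lt hs0)]
  linarith
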